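/- For unit vectors v, w in ℝ^r and Y_r the r×r symmetric matrix with independent standard Gaussian entries {(Y_r)_ij : i ≥ j}, one has E|⟨v, Y_r v⟩ − ⟨w, Y_r w⟩|² ≤ 4‖v − w‖². -/

import Mathlib

open MeasureTheory ProbabilityTheory Real Filter ENNReal NNReal

noncomputable def E1 (x : ℝ) : ℝ := rexp (-(1/2 : ℝ) * x ^ 2)

lemma E1_tendsto_atTop : Tendsto E1 atTop (nhds 0) := by
  have h : Tendsto (fun x : ℝ => -(1/2 : ℝ) * x ^ 2) atTop atBot := by
    apply Tendsto.const_mul_atTop_of_neg (by norm_num)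
    exact tendsto_pow_atTop (by norm_num)
  exact Real.tendsto_exp_atBot.comp h

lemma E1_even (x : ℝ) : E1 (-x) = E1 x := by simp [E1]

lemma integrable_E1 : Integrable E1 := integrable_exp_neg_mul_sq (by norm_num : (0:ℝ) < 1/2)

lemma integrable_mul_E1 : Integrable (fun x : ℝ => x * E1 x) :=
  integrable_mul_exp_neg_mul_sq (by norm_num : (0:ℝ) < 1/2)

lemma integrable_sq_mul_E1 : Integrable (fun x : ℝ => x ^ 2 * E1 x) := by
  have := integrable_rpow_mul_exp_neg_mul_sq (by norm_num : (0:ℝ) < 1/2) (by norm_num : (-1:ℝ) < 2)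
  simpa [E1, Real.rpow_natCast] using this

lemma integral_E1 : ∫ x : ℝ, E1 x = √(2 * π) := by
  have := integral_gaussian (1/2 : ℝ)
  simp only [E1]
  rw [this]
  norm_num
  ring

lemma hasDerivAt_E1 (x : ℝ) : HasDerivAt E1 (-x * E1 x) x := by
  have h1 : HasDerivAt (fun x : ℝ => -(1/2 : ℝ) * x ^ 2) (-x) x := by
    have := ((hasDerivAt_pow 2 x).const_mul (-(1/2 : ℝ)))
    refine this.congr_deriv ?_
    norm_num
    ring
  have := h1.exp
  refine this.congr_deriv ?_
  simp only [E1]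
  ring

lemma integral_mul_E1 : ∫ x : ℝ, x * E1 x = 0 := by
  have hderiv : ∀ x : ℝ, HasDerivAt (fun y : ℝ => -E1 y) (x * E1 x) x := by
    intro x
    have := (hasDerivAt_E1 x).neg
    refine this.congr_deriv ?_
    ring
  have h0 : Tendsto (fun y : ℝ => -E1 y) atTop (nhds 0) := by
    simpa using E1_tendsto_atTop.neg
  have hbot : Tendsto (fun y : ℝ => -E1 y) atBot (nhds 0) := by
    have : (fun y : ℝ => -E1 y) = (fun y : ℝ => -E1 y) ∘ Neg.neg := by
      funext y; simp [E1_even]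
    rw [this]
    exact h0.comp tendsto_neg_atBot_atTop
  have := MeasureTheory.integral_of_hasDerivAt_of_tendsto hderiv integrable_mul_E1 hbot h0
  simpa using this

lemma tendsto_mul_E1_atTop : Tendsto (fun x : ℝ => x * E1 x) atTop (nhds 0) := by
  have h := rpow_mul_exp_neg_mul_sq_isLittleO_exp_neg (by norm_num : (0:ℝ) < 1/2) 1
  have h2 : (fun x : ℝ => x * E1 x) =ᶠ[atTop] fun x : ℝ => x ^ (1:ℝ) * rexp (-(1/2) * x ^ 2) := by
    filter_upwards [eventually_ge_atTop (0:ℝ)] with x hx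
    rw [Real.rpow_one]; rfl
  have h3 : Tendsto (fun x : ℝ => rexp (-(1/2) * x)) atTop (nhds 0) := by
    have : Tendsto (fun x : ℝ => -(1/2 : ℝ) * x) atTop atBot :=
      Tendsto.const_mul_atTop_of_neg (by norm_num) tendsto_id
    exact Real.tendsto_exp_atBot.comp this
  have := h.isBigO.trans_tendsto h3
  exact (Filter.tendsto_congr' h2.symm).mp this

lemma integral_sq_mul_E1 : ∫ x : ℝ, x ^ 2 * E1 x = √(2 * π) := by
  have hderiv : ∀ x : ℝ, HasDerivAt (fun y : ℝ => -y * E1 y) (x ^ 2 * E1 x - E1 x) x := by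
    intro x
    have := ((hasDerivAt_id x).neg).mul (hasDerivAt_E1 x)
    refine this.congr_deriv ?_
    simp only [Pi.neg_apply, id_eq]
    ring
  have htop : Tendsto (fun y : ℝ => -y * E1 y) atTop (nhds 0) := by
    simpa using tendsto_mul_E1_atTop.neg
  have hbot : Tendsto (fun y : ℝ => -y * E1 y) atBot (nhds 0) := by
    have heq : (fun y : ℝ => -y * E1 y) = (fun y : ℝ => y * E1 y) ∘ Neg.neg := by
      funext y; simp [E1_even]
    rw [heq]
    exact tendsto_mul_E1_atTop.comp tendsto_neg_atBot_atTop
  have hint : Integrable (fun x : ℝ => x ^ 2 * E1 x - E1 x) :=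
    integrable_sq_mul_E1.sub integrable_E1
  have h := MeasureTheory.integral_of_hasDerivAt_of_tendsto hderiv hint hbot htop
  rw [integral_sub integrable_sq_mul_E1 integrable_E1, integral_E1] at h
  linarith [h]

lemma pdf01 (x : ℝ) : gaussianPDFReal 0 1 x = (√(2*π))⁻¹ * E1 x := by
  rw [gaussianPDFReal, E1]
  norm_num
  left
  congr 1
  ring

lemma integral_gaussianReal01 (g : ℝ → ℝ) :
    ∫ x, g x ∂(gaussianReal 0 1) = ∫ x, gaussianPDFReal 0 1 x * g x := by
  rw [gaussianReal_of_var_ne_zero 0 one_ne_zero]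
  rw [show (gaussianPDF 0 1) = fun x => ((gaussianPDFReal 0 1 x).toNNReal : ℝ≥0∞) from rfl]
  rw [integral_withDensity_eq_integral_smul ((measurable_gaussianPDFReal 0 1).real_toNNReal) g]
  congr 1; funext x
  simp [NNReal.smul_def, Real.coe_toNNReal _ (gaussianPDFReal_nonneg 0 1 x)]

lemma integral_id_g01 : ∫ x, x ∂(gaussianReal 0 1) = 0 := by
  rw [integral_gaussianReal01 (fun x => x)]
  calc ∫ x, gaussianPDFReal 0 1 x * x = ∫ x, (√(2*π))⁻¹ * (x * E1 x) := by
        congr 1; funext x; rw [pdf01]; ring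
    _ = (√(2*π))⁻¹ * ∫ x, x * E1 x := integral_const_mul _ _
    _ = 0 := by rw [integral_mul_E1]; ring

lemma integral_sq_g01 : ∫ x, x ^ 2 ∂(gaussianReal 0 1) = 1 := by
  rw [integral_gaussianReal01 (fun x => x ^ 2)]
  calc ∫ x, gaussianPDFReal 0 1 x * x ^ 2 = ∫ x, (√(2*π))⁻¹ * (x ^ 2 * E1 x) := by
        congr 1; funext x; rw [pdf01]; ring
    _ = (√(2*π))⁻¹ * ∫ x, x ^ 2 * E1 x := integral_const_mul _ _
    _ = 1 := by
        rw [integral_sq_mul_E1]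
        rw [inv_mul_cancel₀]
        positivity

lemma memLp_two_id_g01 : MemLp (id : ℝ → ℝ) 2 (gaussianReal 0 1) := by
  rw [memLp_two_iff_integrable_sq aestronglyMeasurable_id]
  rw [gaussianReal_of_var_ne_zero 0 one_ne_zero]
  rw [show (gaussianPDF 0 1) = fun x => ((gaussianPDFReal 0 1 x).toNNReal : ℝ≥0∞) from rfl]
  rw [integrable_withDensity_iff_integrable_smul ((measurable_gaussianPDFReal 0 1).real_toNNReal)]
  have : (fun x : ℝ => ((gaussianPDFReal 0 1 x).toNNReal : ℝ≥0) • (id x ^ 2))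
      = fun x : ℝ => (√(2*π))⁻¹ * (x ^ 2 * E1 x) := by
    funext x
    rw [NNReal.smul_def, Real.coe_toNNReal _ (gaussianPDFReal_nonneg 0 1 x), pdf01]
    simp only [smul_eq_mul, id_eq]
    ring
  rw [this]
  exact integrable_sq_mul_E1.const_mul _

lemma sym_sum {r : ℕ} (f : Fin r → Fin r → ℝ) (hf : ∀ i j, f i j = f j i) :
    ∑ i, ∑ j, f i j =
      ∑ q : {q : Fin r × Fin r // q.2 ≤ q.1},
        (if q.1.1 = q.1.2 then f q.1.1 q.1.2 else 2 * f q.1.1 q.1.2) := by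
  classical
  rw [← (Finset.sum_subtype (Finset.univ.filter (fun q : Fin r × Fin r => q.2 ≤ q.1))
    (by simp) (fun q : Fin r × Fin r => if q.1 = q.2 then f q.1 q.2 else 2 * f q.1 q.2))]
  rw [show (∑ i, ∑ j, f i j) = ∑ q : Fin r × Fin r, f q.1 q.2 from
      (Fintype.sum_prod_type (f := fun q : Fin r × Fin r => f q.1 q.2)).symm,
    ← Finset.sum_filter_add_sum_filter_not Finset.univ (fun q : Fin r × Fin r => q.2 ≤ q.1)]
  have key : ∀ q ∈ Finset.univ.filter (fun q : Fin r × Fin r => q.2 ≤ q.1),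
      (if q.1 = q.2 then f q.1 q.2 else 2 * f q.1 q.2)
        = f q.1 q.2 + (if ¬ q.1 = q.2 then f q.1 q.2 else 0) := by
    intro q _; split_ifs <;> ring
  rw [Finset.sum_congr rfl key, Finset.sum_add_distrib, ← Finset.sum_filter,
    Finset.filter_filter]
  have hset : (Finset.univ.filter fun q : Fin r × Fin r => q.2 ≤ q.1 ∧ ¬ q.1 = q.2)
      = Finset.univ.filter fun q : Fin r × Fin r => q.2 < q.1 := by
    apply Finset.filter_congr
    intro q _
    constructor
    · rintro ⟨h1, h2⟩; exact lt_of_le_of_ne h1 (fun h => h2 h.symm)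
    · intro h; exact ⟨h.le, fun h2 => absurd h2.symm h.ne⟩
  rw [hset]
  have hswap : ∑ q ∈ Finset.univ.filter (fun q : Fin r × Fin r => q.2 < q.1), f q.1 q.2
      = ∑ q ∈ Finset.univ.filter (fun q : Fin r × Fin r => ¬ q.2 ≤ q.1), f q.1 q.2 := by
    apply Finset.sum_nbij' (i := Prod.swap) (j := Prod.swap)
    · intro a ha
      simp only [Finset.mem_filter, Finset.mem_univ, true_and] at ha ⊢
      simpa using ha
    · intro a ha
      simp only [Finset.mem_filter, Finset.mem_univ, true_and, not_le] at ha ⊢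
      exact ha
    · intro a _; simp
    · intro a _; simp
    · intro a _; exact hf a.1 a.2
  rw [hswap]

theorem stmt_4
    {Ω : Type*} [MeasurableSpace Ω] (μ : Measure Ω) [IsProbabilityMeasure μ]
    (r : ℕ) (Y : Fin r → Fin r → Ω → ℝ)
    (hY_symm : ∀ i j, Y i j = Y j i)
    (hY_meas : ∀ i j, Measurable (Y i j))
    (hY_gauss : ∀ i j, Measure.map (Y i j) μ = gaussianReal 0 1)
    (hY_indep : iIndepFun
      (fun q : {q : Fin r × Fin r // q.2 ≤ q.1} => Y q.1.1 q.1.2) μ)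
    (v w : Fin r → ℝ) (hv : ∑ i, (v i) ^ 2 = 1) (hw : ∑ i, (w i) ^ 2 = 1) :
    ∫ ω, |(∑ i, ∑ j, v i * Y i j ω * v j) - (∑ i, ∑ j, w i * Y i j ω * w j)| ^ 2 ∂μ ≤
      4 * ∑ i, (v i - w i) ^ 2 := by
  classical
  set ι := {q : Fin r × Fin r // q.2 ≤ q.1}
  set a : Fin r → Fin r → ℝ := fun i j => v i * v j - w i * w j with ha
  set c : ι → ℝ := fun q => if q.1.1 = q.1.2 then a q.1.1 q.1.2 else 2 * a q.1.1 q.1.2 with hc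
  set X : ι → Ω → ℝ := fun q => Y q.1.1 q.1.2 with hX
  set Z : ι → Ω → ℝ := fun q => fun ω => c q * X q ω with hZ
  -- pointwise rewriting
  have hpt : ∀ ω, (∑ i, ∑ j, v i * Y i j ω * v j) - (∑ i, ∑ j, w i * Y i j ω * w j)
      = ∑ q : ι, Z q ω := by
    intro ω
    have h1 : (∑ i, ∑ j, v i * Y i j ω * v j) - (∑ i, ∑ j, w i * Y i j ω * w j)
        = ∑ i, ∑ j, a i j * Y i j ω := by
      rw [← Finset.sum_sub_distrib]
      refine Finset.sum_congr rfl fun i _ => ?_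
      rw [← Finset.sum_sub_distrib]
      refine Finset.sum_congr rfl fun j _ => ?_
      simp only [ha]; ring
    rw [h1, sym_sum (fun i j => a i j * Y i j ω) (fun i j => by
      show a i j * Y i j ω = a j i * Y j i ω
      rw [hY_symm i j]; simp only [ha]; ring)]
    refine Finset.sum_congr rfl fun q _ => ?_
    simp only [hZ, hc, hX]
    split_ifs <;> ring
  -- measurability and moments
  have hXm : ∀ q : ι, Measurable (X q) := fun q => hY_meas _ _
  have hXg : ∀ q : ι, Measure.map (X q) μ = gaussianReal 0 1 := fun q => hY_gauss _ _
  have hXL2 : ∀ q : ι, MemLp (X q) 2 μ := by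
    intro q
    have h := memLp_two_id_g01
    rw [← hXg q] at h
    exact (memLp_map_measure_iff aestronglyMeasurable_id (hXm q).aemeasurable).mp h
  have hEX : ∀ q : ι, ∫ ω, X q ω ∂μ = 0 := by
    intro q
    have h : ∫ x, x ∂(Measure.map (X q) μ) = ∫ ω, X q ω ∂μ :=
      integral_map (hXm q).aemeasurable aestronglyMeasurable_id
    rw [← h, hXg q, integral_id_g01]
  have hEX2 : ∀ q : ι, ∫ ω, (X q ω) ^ 2 ∂μ = 1 := by
    intro q
    have h : ∫ x, x ^ 2 ∂(Measure.map (X q) μ) = ∫ ω, (X q ω) ^ 2 ∂μ :=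
      integral_map (hXm q).aemeasurable (measurable_id.pow_const 2).aestronglyMeasurable
    rw [← h, hXg q, integral_sq_g01]
  have hVarX : ∀ q : ι, variance (X q) μ = 1 := by
    intro q
    rw [variance_eq_sub (hXL2 q)]
    simp only [Pi.pow_apply]
    rw [hEX2 q, hEX q]
    norm_num
  -- Z facts
  have hZL2 : ∀ q : ι, MemLp (Z q) 2 μ := fun q => (hXL2 q).const_mul (c q)
  have hZint : ∀ q : ι, Integrable (Z q) μ :=
    fun q => (hZL2 q).integrable one_le_two
  have hpair : Set.Pairwise ↑(Finset.univ : Finset ι) fun i j => IndepFun (Z i) (Z j) μ := by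
    intro i _ j _ hij
    have h0 := hY_indep.indepFun hij
    exact h0.comp (measurable_const_mul (c i)) (measurable_const_mul (c j))
  have hVarZ : variance (∑ q : ι, Z q) μ = ∑ q : ι, (c q) ^ 2 := by
    rw [IndepFun.variance_sum (fun q _ => hZL2 q) hpair]
    refine Finset.sum_congr rfl fun q _ => ?_
    rw [show Z q = fun ω => c q * X q ω from rfl, variance_const_mul, hVarX q, mul_one]
  have hEZsum : ∫ ω, (∑ q : ι, Z q) ω ∂μ = 0 := by
    simp only [Finset.sum_apply]
    rw [integral_finset_sum _ (fun q _ => hZint q)]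
    refine Finset.sum_eq_zero fun q _ => ?_
    simp only [hZ]
    rw [integral_const_mul, hEX q, mul_zero]
  have hsumL2 : MemLp (∑ q : ι, Z q) 2 μ := memLp_finset_sum' _ (fun q _ => hZL2 q)
  have hmoment : ∫ ω, (∑ q : ι, Z q ω) ^ 2 ∂μ = ∑ q : ι, (c q) ^ 2 := by
    have h := variance_eq_sub hsumL2
    rw [hVarZ, hEZsum] at h
    have h2 : μ[(∑ q : ι, Z q) ^ 2] = ∫ ω, (∑ q : ι, Z q ω) ^ 2 ∂μ := by
      refine integral_congr_ae (Filter.Eventually.of_forall fun ω => ?_)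
      simp [Finset.sum_apply]
    rw [h2] at h
    linarith [h]
  -- algebra
  have hs : ∑ i, (v i - w i) ^ 2 = 2 - 2 * ∑ i, v i * w i := by
    have : ∀ i, (v i - w i) ^ 2 = v i ^ 2 + w i ^ 2 - 2 * (v i * w i) := fun i => by ring
    simp_rw [this]
    rw [Finset.sum_sub_distrib, Finset.sum_add_distrib, hv, hw, ← Finset.mul_sum]
    ring
  have hexp : ∑ i, ∑ j, (a i j) ^ 2 = 2 - 2 * (∑ i, v i * w i) ^ 2 := by
    have inner : ∀ i, ∑ j, a i j ^ 2
        = v i ^ 2 + w i ^ 2 - 2 * (v i * w i) * (∑ j, v j * w j) := by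
      intro i
      have h : ∀ j, a i j ^ 2
          = v i ^ 2 * v j ^ 2 + w i ^ 2 * w j ^ 2 - 2 * (v i * w i) * (v j * w j) :=
        fun j => by simp only [ha]; ring
      rw [Finset.sum_congr rfl (fun j _ => h j), Finset.sum_sub_distrib, Finset.sum_add_distrib,
        ← Finset.mul_sum, ← Finset.mul_sum, ← Finset.mul_sum, hv, hw]
      ring
    rw [Finset.sum_congr rfl (fun i _ => inner i), Finset.sum_sub_distrib,
      Finset.sum_add_distrib, hv, hw, ← Finset.sum_mul, ← Finset.mul_sum]
    ring
  have hcle : ∑ q : ι, (c q) ^ 2 ≤ 2 * ∑ i, ∑ j, (a i j) ^ 2 := by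
    have h := sym_sum (fun i j => (a i j) ^ 2) (fun i j => by
      show a i j ^ 2 = a j i ^ 2
      simp only [ha]; ring)
    rw [h, Finset.mul_sum]
    refine Finset.sum_le_sum fun q _ => ?_
    simp only [hc]
    split_ifs <;> nlinarith [sq_nonneg (a q.1.1 q.1.2)]
  -- put together
  calc ∫ ω, |(∑ i, ∑ j, v i * Y i j ω * v j) - (∑ i, ∑ j, w i * Y i j ω * w j)| ^ 2 ∂μ
      = ∫ ω, (∑ q : ι, Z q ω) ^ 2 ∂μ := by
        refine integral_congr_ae (Filter.Eventually.of_forall fun ω => ?_)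
        simp only [sq_abs]
        rw [hpt ω]
    _ = ∑ q : ι, (c q) ^ 2 := hmoment
    _ ≤ 2 * ∑ i, ∑ j, (a i j) ^ 2 := hcle
    _ ≤ 4 * ∑ i, (v i - w i) ^ 2 := by
        rw [hexp, hs]
        nlinarith [sq_nonneg ((∑ i, v i * w i) - 1)]
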